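/- The map sending the switching class of a graph G on n vertices to the isomorphism class of its double G̃ is a bijection between switching classes of graphs on n vertices and isomorphism classes of n-rainbow graphs on 2n vertices. -/

import Mathlib

open SimpleGraph

/-- `c` is an `n`-rainbow coloring of `G`: every color appears exactly once in the
open neighborhood of each vertex. -/
def IsRainbow {V : Type*} {n : ℕ} (G : SimpleGraph V) (c : V → Fin n) : Prop :=
  ∀ v : V, ∀ i : Fin n, ∃! w : V, G.Adj v w ∧ c w = i

/-- Switching `G` at the vertex `v`: reverse the adjacency between `v` and all other
vertices. -/
def switch {V : Type*} (G : SimpleGraph V) (v : V) : SimpleGraph V :=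
  SimpleGraph.fromRel (fun x y => Xor' (G.Adj x y) (x = v ∨ y = v))

/-- The double `G̃` of `G`: vertices `inl i` (= `i`) and `inr i` (= `i'`), with edges
`(i,i')`; `(i,j)` and `(i',j')` for edges `(i,j)` of `G`; and `(i,j')`, `(i',j)` for
non-edges `i ≠ j` of `G`. -/
def double {V : Type*} (G : SimpleGraph V) : SimpleGraph (V ⊕ V) :=
  SimpleGraph.fromRel (fun x y =>
    match x, y with
    | .inl i, .inl j => G.Adj i j
    | .inr i, .inr j => G.Adj i j
    | .inl i, .inr j => i = j ∨ ¬ G.Adj i j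
    | .inr i, .inl j => i = j ∨ ¬ G.Adj i j)

open Classical in
/-- The Seidel matrix of `G`: zero diagonal, `1` for edges, `-1` for non-edges. -/
noncomputable def seidel {V : Type*} (G : SimpleGraph V) : Matrix V V ℝ :=
  fun i j => if i = j then 0 else if G.Adj i j then 1 else -1

/-- A Seidel matrix: symmetric, zero diagonal, off-diagonal entries `±1`. -/
def IsSeidel {m : Type*} (A : Matrix m m ℝ) : Prop :=
  A.IsSymm ∧ (∀ i, A i i = 0) ∧ ∀ i j, i ≠ j → A i j = 1 ∨ A i j = -1

/-- A permutation matrix. -/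
def IsPermMatrix {m : Type*} [DecidableEq m] (P : Matrix m m ℝ) : Prop :=
  ∃ σ : Equiv.Perm m, P = σ.permMatrix ℝ

/-- A line (row or column) with exactly one nonzero entry, equal to `±1`. -/
def SignedPermLine {m : Type*} (r : m → ℝ) : Prop :=
  ∃ j, (r j = 1 ∨ r j = -1) ∧ ∀ k, k ≠ j → r k = 0

/-- A line with either exactly one nonzero entry `±1`, or exactly two nonzero entries,
each `±1/2`. -/
def HalfLine {m : Type*} (r : m → ℝ) : Prop :=
  SignedPermLine r ∨
    ∃ j k, j ≠ k ∧ (r j = 1/2 ∨ r j = -1/2) ∧ (r k = 1/2 ∨ r k = -1/2) ∧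
      ∀ l, l ≠ j → l ≠ k → r l = 0

/-- A signed permutation matrix: exactly one nonzero entry, `±1`, in every row and column. -/
def IsSignedPermMatrix {m : Type*} (Q : Matrix m m ℝ) : Prop :=
  (∀ i, SignedPermLine (Q i)) ∧ (∀ j, SignedPermLine (fun i => Q i j))

/-- A signed half-permutation matrix. -/
def IsSignedHalfPermMatrix {m : Type*} (S : Matrix m m ℝ) : Prop :=
  (∀ i, HalfLine (S i)) ∧ (∀ j, HalfLine (fun i => S i j))

/-- `T` is an integration of the signed half-permutation matrix `S`. -/
def IsIntegration {m : Type*} (T S : Matrix m m ℝ) : Prop :=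
  IsSignedPermMatrix T ∧
    ∀ i j, ((S i j = 1 ∨ S i j = -1) → T i j = S i j) ∧
      ((S i j = 1/2 ∨ S i j = -1/2) → T i j = 2 * S i j ∨ T i j = 0) ∧
      (S i j = 0 → T i j = 0)

/-- Labeled switching equivalence: a sequence of switchings transforms `G` into `G'`. -/
def SwitchEquiv {V : Type*} (G G' : SimpleGraph V) : Prop :=
  Relation.ReflTransGen (fun H H' => ∃ v, H' = switch H v) G G'

/-- Switching equivalence allowing relabeling. -/
def SwitchEquivIso {V : Type*} (G G' : SimpleGraph V) : Prop :=
  ∃ H, SwitchEquiv G H ∧ Nonempty (H ≃g G')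

/-- The subgraph of `G` consisting of all edges whose endpoints get the same color. -/
def sameColorSubgraph {V : Type*} {n : ℕ} (G : SimpleGraph V) (c : V → Fin n) :
    G.Subgraph where
  verts := Set.univ
  Adj a b := G.Adj a b ∧ c a = c b
  adj_sub h := h.1
  edge_vert _ := Set.mem_univ _
  symm := ⟨fun a b h => ⟨h.1.symm, h.2.symm⟩⟩

/-- The `2n × 2n` block matrix `M̃ = [[M, I−M],[I−M, M]]`. -/
def tildeMat {n : ℕ} (M : Matrix (Fin n) (Fin n) ℝ) :
    Matrix (Fin n ⊕ Fin n) (Fin n ⊕ Fin n) ℝ :=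
  Matrix.fromBlocks M (1 - M) (1 - M) M

/-- Isomorphism relation on `n`-rainbow graphs on `Fin n ⊕ Fin n`. -/
def RainbowIsoRel (n : ℕ) :
    {H : SimpleGraph (Fin n ⊕ Fin n) // ∃ c : (Fin n ⊕ Fin n) → Fin n, IsRainbow H c} →
    {H : SimpleGraph (Fin n ⊕ Fin n) // ∃ c : (Fin n ⊕ Fin n) → Fin n, IsRainbow H c} → Prop :=
  fun H H' => Nonempty (H.1 ≃g H'.1)

section Basics
variable {V : Type*} (G : SimpleGraph V)

lemma double_adj_ll {i j : V} : (double G).Adj (.inl i) (.inl j) ↔ G.Adj i j := by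
  constructor
  · rintro ⟨-, h | h⟩
    · exact h
    · exact h.symm
  · intro h
    exact ⟨by simp [h.ne], Or.inl h⟩

lemma double_adj_rr {i j : V} : (double G).Adj (.inr i) (.inr j) ↔ G.Adj i j := by
  constructor
  · rintro ⟨-, h | h⟩
    · exact h
    · exact h.symm
  · intro h
    exact ⟨by simp [h.ne], Or.inl h⟩

lemma double_adj_lr {i j : V} : (double G).Adj (.inl i) (.inr j) ↔ (i = j ∨ ¬ G.Adj i j) := by
  constructor
  · rintro ⟨-, h | h⟩
    · exact h
    · rcases h with h | h
      · exact Or.inl h.symm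
      · exact Or.inr (fun hh => h hh.symm)
  · intro h
    refine ⟨by simp, Or.inl h⟩

lemma double_adj_rl {i j : V} : (double G).Adj (.inr i) (.inl j) ↔ (i = j ∨ ¬ G.Adj i j) := by
  rw [adj_comm, double_adj_lr]
  constructor <;> rintro (h | h)
  · exact Or.inl h.symm
  · exact Or.inr (fun hh => h hh.symm)
  · exact Or.inl h.symm
  · exact Or.inr (fun hh => h hh.symm)

lemma switch_adj {v x y : V} :
    (switch G v).Adj x y ↔ x ≠ y ∧ Xor' (G.Adj x y) (x = v ∨ y = v) := by
  unfold switch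
  rw [fromRel_adj]
  have : Xor' (G.Adj y x) (y = v ∨ x = v) ↔ Xor' (G.Adj x y) (x = v ∨ y = v) := by
    rw [adj_comm, or_comm]
  rw [this, or_self]

end Basics

section SwitchB
variable {V : Type*}

/-- Switching at the set `{x | s x}`. -/
def switchB (G : SimpleGraph V) (s : V → Prop) : SimpleGraph V :=
  SimpleGraph.fromRel (fun x y => Xor' (G.Adj x y) (¬ (s x ↔ s y)))

lemma switchB_adj {G : SimpleGraph V} {s : V → Prop} {x y : V} :
    (switchB G s).Adj x y ↔ x ≠ y ∧ Xor' (G.Adj x y) (¬ (s x ↔ s y)) := by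
  unfold switchB
  rw [fromRel_adj]
  have : Xor' (G.Adj y x) (¬ (s y ↔ s x)) ↔ Xor' (G.Adj x y) (¬ (s x ↔ s y)) := by
    rw [adj_comm]
    simp only [Xor', xor_def]
    tauto
  rw [this, or_self]

lemma switchB_congr {G : SimpleGraph V} {s s' : V → Prop} (h : ∀ x, s x ↔ s' x) :
    switchB G s = switchB G s' := by
  ext x y
  rw [switchB_adj, switchB_adj, h x, h y]

lemma switchB_switchB {G : SimpleGraph V} {s : V → Prop} :
    switchB (switchB G s) s = G := by
  classical
  ext x y
  simp only [switchB_adj, Xor', xor_def]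
  by_cases hne : x = y
  · subst hne
    simp
  · by_cases hs : s x ↔ s y <;> simp [hne, hs] <;> tauto

lemma switchB_empty (G : SimpleGraph V) : switchB G (fun _ => False) = G := by
  ext x y
  simp only [switchB_adj, Xor', xor_def]
  by_cases hne : x = y
  · subst hne
    simp
  · simp [hne]

end SwitchB

section SwitchEquivB
variable {V : Type*} [Fintype V] [DecidableEq V]

lemma switchB_insert (G : SimpleGraph V) (t : Finset V) (a : V) (ha : a ∉ t) :
    switchB G (fun x => x ∈ insert a t) = switch (switchB G (fun x => x ∈ t)) a := by
  ext x y
  simp only [switchB_adj, switch_adj, Xor', xor_def]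
  by_cases hne : x = y
  · subst hne; simp
  · by_cases hx : x = a <;> by_cases hy : y = a
    · exact absurd (hx.trans hy.symm) hne
    · subst hx
      have hyt : (y ∈ insert x t ↔ y ∈ t) := by
        simp [Finset.mem_insert, hy]
      simp [hne, ha, hyt, Xor', xor_def]
      tauto
    · subst hy
      have hxt : (x ∈ insert y t ↔ x ∈ t) := by
        simp [Finset.mem_insert, hx]
      simp [hne, ha, hxt, Xor', xor_def]
      tauto
    · have h1 : (x ∈ insert a t ↔ x ∈ t) := by simp [Finset.mem_insert, hx]
      have h2 : (y ∈ insert a t ↔ y ∈ t) := by simp [Finset.mem_insert, hy]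
      simp [hne, hx, hy, h1, h2, Xor', xor_def]

lemma switchEquiv_switchB_finset (G : SimpleGraph V) (t : Finset V) :
    SwitchEquiv G (switchB G (fun x => x ∈ t)) := by
  induction t using Finset.induction with
  | empty =>
    have h0 : switchB G (fun x => x ∈ (∅ : Finset V)) = G := by
      have he : (fun x => x ∈ (∅ : Finset V)) = fun _ : V => False := by
        funext x; simp
      rw [he]; exact switchB_empty G
    rw [h0]
    exact Relation.ReflTransGen.refl
  | @insert a t ha ih =>
    rw [switchB_insert G t a ha]
    exact Relation.ReflTransGen.tail ih ⟨a, rfl⟩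

lemma switchEquiv_switchB (G : SimpleGraph V) (s : V → Prop) :
    SwitchEquiv G (switchB G s) := by
  classical
  have : switchB G s = switchB G (fun x => x ∈ Finset.univ.filter (fun x => s x)) := by
    apply switchB_congr
    intro x
    simp
  rw [this]
  exact switchEquiv_switchB_finset G _

lemma switchEquiv_trans {G H K : SimpleGraph V} (h1 : SwitchEquiv G H) (h2 : SwitchEquiv H K) :
    SwitchEquiv G K := Relation.ReflTransGen.trans h1 h2

end SwitchEquivB

section IsoTransport
variable {V W : Type*}

/-- Transport a switching along an isomorphism. -/
noncomputable def switchBIso {A : SimpleGraph V} {B : SimpleGraph W} (e : A ≃g B)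
    (s : W → Prop) : switchB A (fun x => s (e x)) ≃g switchB B s := by
  refine ⟨e.toEquiv, ?_⟩
  intro x y
  simp only [RelIso.coe_fn_toEquiv]
  rw [switchB_adj, switchB_adj]
  have hadj : B.Adj (e x) (e y) ↔ A.Adj x y := e.map_adj_iff
  have hne : (e x ≠ e y) ↔ x ≠ y := by
    simp [e.toEquiv.injective.ne_iff]
  rw [hadj, hne]

end IsoTransport

section Parity
variable {V : Type*}

open Equiv

/-- Two fixed-point-free involutions admit a common alternating 2-coloring. -/
lemma exists_parity_coloring (m m' : V → V)
    (hm : Function.Involutive m) (hm' : Function.Involutive m')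
    (hfm : ∀ v, m v ≠ v) (hfm' : ∀ v, m' v ≠ v) :
    ∃ c : V → Prop, (∀ v, c (m v) ↔ ¬ c v) ∧ (∀ v, c (m' v) ↔ ¬ c v) := by
  classical
  set em : Perm V := hm.toPerm m with hem
  set em' : Perm V := hm'.toPerm m' with hem'
  have hem_apply : ∀ v, em v = m v := fun v => rfl
  have hem'_apply : ∀ v, em' v = m' v := fun v => rfl
  have hem2 : em * em = 1 := by
    ext v; simp [Perm.mul_apply, hem_apply, hm v]
  have hem'2 : em' * em' = 1 := by
    ext v; simp [Perm.mul_apply, hem'_apply, hm' v]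
  have heminv : em⁻¹ = em := by rw [← mul_eq_one_iff_inv_eq, hem2]
  have hem'inv : em'⁻¹ = em' := by rw [← mul_eq_one_iff_inv_eq, hem'2]
  set σ : Perm V := em * em' with hσ
  have hσinv : σ⁻¹ = em' * em := by
    rw [hσ, mul_inv_rev, heminv, hem'inv]
  have hconj : em * σ * em⁻¹ = σ⁻¹ := by
    rw [heminv, hσinv, hσ]
    rw [show em * (em * em') * em = (em * em) * (em' * em) by group, hem2, one_mul]
  have hconjk : ∀ k : ℤ, em * σ ^ k * em⁻¹ = σ ^ (-k) := by
    intro k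
    have h1 : (MulAut.conj em) (σ ^ k) = ((MulAut.conj em) σ) ^ k := map_zpow _ _ _
    have h2 : (MulAut.conj em) σ = σ⁻¹ := hconj
    rw [h2] at h1
    have h3 : (MulAut.conj em) (σ ^ k) = em * σ ^ k * em⁻¹ := rfl
    rw [h3] at h1
    rw [h1, inv_zpow, zpow_neg]
  have hcomm : ∀ (k : ℤ) (v : V), em ((σ ^ k) v) = (σ ^ (-k)) (em v) := by
    intro k v
    have h4 : em * σ ^ k = σ ^ (-k) * em := by
      calc em * σ ^ k = (em * σ ^ k * em⁻¹) * em := by group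
        _ = σ ^ (-k) * em := by rw [hconjk]
    calc em ((σ ^ k) v) = (em * σ ^ k) v := rfl
      _ = (σ ^ (-k) * em) v := by rw [h4]
      _ = (σ ^ (-k)) (em v) := rfl
  have hcancel : ∀ (k : ℤ) (x : V), (σ ^ (-k)) ((σ ^ k) x) = x := by
    intro k x
    calc (σ ^ (-k)) ((σ ^ k) x) = ((σ ^ (-k)) * σ ^ k) x := rfl
      _ = (σ ^ (-k + k)) x := by rw [zpow_add]
      _ = x := by simp
  -- key: no power of σ maps v to m v
  have hkey : ∀ (v : V) (k : ℤ), (σ ^ k) v ≠ m v := by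
    intro v k hk
    rcases Int.even_or_odd k with ⟨j, hj⟩ | ⟨j, hj⟩
    · apply hfm ((σ ^ j) v)
      have h5 : m ((σ ^ j) v) = (σ ^ (-j)) (m v) := hcomm j v
      rw [h5, ← hk, hj]
      have hmul : σ ^ (-j) * σ ^ (j + j) = σ ^ j := by
        rw [← zpow_add]
        congr 1
        ring
      calc (σ ^ (-j)) ((σ ^ (j + j)) v) = ((σ ^ (-j)) * σ ^ (j + j)) v := rfl
        _ = (σ ^ j) v := by rw [hmul]
    · apply hfm' ((σ ^ j) v)
      have h5 : em' = em * σ := by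
        rw [hσ, show em * (em * em') = (em * em) * em' by group, hem2, one_mul]
      have h6 : m' ((σ ^ j) v) = em ((σ ^ (j + 1)) v) := by
        rw [← hem'_apply, h5]
        calc (em * σ) ((σ ^ j) v) = (em * (σ * σ ^ j)) v := rfl
          _ = (em * σ ^ (j + 1)) v := by
              rw [show σ * σ ^ j = σ ^ ((1 : ℤ) + j) by rw [zpow_add, zpow_one], add_comm]
          _ = em ((σ ^ (j + 1)) v) := rfl
      rw [h6, hcomm (j + 1) v, hem_apply, ← hk, hj]
      have hmul : σ ^ (-(j + 1)) * σ ^ (2 * j + 1) = σ ^ j := by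
        rw [← zpow_add]
        congr 1
        ring
      calc (σ ^ (-(j + 1))) ((σ ^ (2 * j + 1)) v) = ((σ ^ (-(j + 1))) * σ ^ (2 * j + 1)) v := rfl
        _ = (σ ^ j) v := by rw [hmul]
  have hkey' : ∀ v : V, ¬ σ.SameCycle v (m v) := by
    rintro v ⟨k, hk⟩
    exact hkey v k hk
  -- auxiliary transfers
  have hmswap : ∀ v w, σ.SameCycle v (m w) → σ.SameCycle w (m v) := by
    rintro v w ⟨k, hk⟩
    refine ⟨k, ?_⟩
    have h1 : em ((σ ^ k) w) = v := by
      rw [hcomm k w, hem_apply, ← hk, hcancel]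
    have h2 : m (m ((σ ^ k) w)) = m v := by rw [show em ((σ^k) w) = m _ from rfl] at h1; rw [h1]
    rw [hm] at h2
    exact h2
  have hmmap : ∀ v w, σ.SameCycle v w → σ.SameCycle (m v) (m w) := by
    rintro v w ⟨k, hk⟩
    refine ⟨-k, ?_⟩
    rw [← hk]
    rw [show m v = em v from rfl, ← hcomm k v]
    rfl
  set R : V → V → Prop := fun v w => σ.SameCycle v w ∨ σ.SameCycle v (m w) with hR
  have hequiv : Equivalence R := by
    constructor
    · intro v; exact Or.inl (Equiv.Perm.SameCycle.refl σ v)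
    · intro v w h
      rcases h with h | h
      · exact Or.inl h.symm
      · exact Or.inr (hmswap v w h)
    · intro u v w h1 h2
      rcases h1 with h1 | h1 <;> rcases h2 with h2 | h2
      · exact Or.inl (h1.trans h2)
      · exact Or.inr (h1.trans h2)
      · exact Or.inr (h1.trans (hmmap v w h2))
      · exact Or.inl (h1.trans (hmswap v w h2).symm)
  -- build the coloring via orbit representatives
  have hsound : ∀ v w, R v w → Quot.mk R v = Quot.mk R w := fun v w h => Quot.sound h
  have hrel_out : ∀ v, R (Quot.mk R v).out v := by
    intro v
    have h1 : Quot.mk R (Quot.mk R v).out = Quot.mk R v := Quot.out_eq _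
    rw [Quot.eq] at h1
    exact (hequiv.eqvGen_iff).mp h1
  set c : V → Prop := fun v => σ.SameCycle (Quot.mk R v).out v with hc
  have hout_m : ∀ v, (Quot.mk R (m v)).out = (Quot.mk R v).out := by
    intro v
    have : Quot.mk R (m v) = Quot.mk R v :=
      hsound _ _ (Or.inr (Equiv.Perm.SameCycle.refl σ (m v)))
    rw [this]
  have flip_m : ∀ v, c (m v) ↔ ¬ c v := by
    intro v
    simp only [hc]
    rw [hout_m v]
    constructor
    · intro h1 h2
      exact hkey' v (h2.symm.trans h1)
    · intro h2
      rcases hrel_out v with h | h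
      · exact absurd h h2
      · exact h
  have hout_σ : ∀ v, (Quot.mk R (σ v)).out = (Quot.mk R v).out := by
    intro v
    have : Quot.mk R (σ v) = Quot.mk R v :=
      hsound _ _ (Or.inl ⟨-1, by
        have : (σ ^ (-1 : ℤ)) (σ v) = (σ ^ (-1 : ℤ)) ((σ ^ (1 : ℤ)) v) := by rw [zpow_one]
        rw [this, hcancel]⟩)
    rw [this]
  have flip_σ : ∀ v, c (σ v) ↔ c v := by
    intro v
    simp only [hc]
    rw [hout_σ v]
    constructor
    · intro h
      exact h.trans ⟨-1, by
        have : (σ ^ (-1 : ℤ)) (σ v) = (σ ^ (-1 : ℤ)) ((σ ^ (1 : ℤ)) v) := by rw [zpow_one]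
        rw [this, hcancel]⟩
    · intro h
      exact h.trans ⟨1, by rw [zpow_one]⟩
  have flip_m' : ∀ v, c (m' v) ↔ ¬ c v := by
    intro v
    have hmm : m (σ v) = m' v := by
      have : σ v = m (m' v) := rfl
      rw [this, hm]
    rw [← hmm, flip_m (σ v), flip_σ v]
  exact ⟨c, flip_m, flip_m'⟩

end Parity

section DoubleRainbow
variable {n : ℕ}

lemma rainbow_double (G : SimpleGraph (Fin n)) :
    IsRainbow (double G) (Sum.elim id id) := by
  intro v i
  cases v with
  | inl a =>
    classical
    refine ⟨if G.Adj a i then Sum.inl i else Sum.inr i, ?_, ?_⟩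
    · split_ifs with h
      · exact ⟨(double_adj_ll G).mpr h, rfl⟩
      · exact ⟨(double_adj_lr G).mpr (by tauto), rfl⟩
    · rintro w ⟨hadj, hcw⟩
      cases w with
      | inl j =>
        simp only [Sum.elim_inl, id_eq] at hcw
        subst hcw
        have := (double_adj_ll G).mp hadj
        simp [this]
      | inr j =>
        simp only [Sum.elim_inr, id_eq] at hcw
        subst hcw
        have h2 := (double_adj_lr G).mp hadj
        have : ¬ G.Adj a j := by
          rcases h2 with h2 | h2
          · subst h2; exact fun hc => hc.ne rfl
          · exact h2
        simp [this]
  | inr a =>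
    classical
    refine ⟨if G.Adj a i then Sum.inr i else Sum.inl i, ?_, ?_⟩
    · split_ifs with h
      · exact ⟨(double_adj_rr G).mpr h, rfl⟩
      · exact ⟨(double_adj_rl G).mpr (by tauto), rfl⟩
    · rintro w ⟨hadj, hcw⟩
      cases w with
      | inl j =>
        simp only [Sum.elim_inl, id_eq] at hcw
        subst hcw
        have h2 := (double_adj_rl G).mp hadj
        have : ¬ G.Adj a j := by
          rcases h2 with h2 | h2
          · subst h2; exact fun hc => hc.ne rfl
          · exact h2
        simp [this]
      | inr j =>
        simp only [Sum.elim_inr, id_eq] at hcw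
        subst hcw
        have := (double_adj_rr G).mp hadj
        simp [this]

end DoubleRainbow

section DoubleIso
variable {n : ℕ}

/-- The double of a switched graph is isomorphic to the double. -/
noncomputable def doubleSwitchIso (G : SimpleGraph (Fin n)) (v : Fin n) :
    double (switch G v) ≃g double G := by
  classical
  refine ⟨Equiv.swap (Sum.inl v) (Sum.inr v), ?_⟩
  intro x y
  rcases x with i | i <;> rcases y with j | j <;>
    by_cases hi : i = v <;> by_cases hj : j = v <;> subst_vars <;>
    simp only [Equiv.swap_apply_def] <;>
    simp_all [double_adj_ll, double_adj_lr, double_adj_rl, double_adj_rr, switch_adj, Xor', xor_def] <;>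
    first
      | tauto
      | (intro h; exact h.ne)

end DoubleIso

section DoubleIso2
variable {n : ℕ}

/-- `double` is functorial for isomorphisms. -/
noncomputable def doubleMapIso {G G' : SimpleGraph (Fin n)} (e : G ≃g G') :
    double G ≃g double G' := by
  refine ⟨Equiv.sumCongr e.toEquiv e.toEquiv, ?_⟩
  intro x y
  have hinj := e.toEquiv.injective
  rcases x with i | i <;> rcases y with j | j <;>
    simp only [Equiv.sumCongr_apply, Sum.map_inl, Sum.map_inr, RelIso.coe_fn_toEquiv] <;>
    simp only [double_adj_ll, double_adj_lr, double_adj_rl, double_adj_rr] <;>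
    rw [show ∀ a b, G'.Adj (e a) (e b) ↔ G.Adj a b from fun a b => e.map_adj_iff] <;>
    simp [hinj.eq_iff]

lemma double_iso_of_switchEquiv {G H : SimpleGraph (Fin n)} (h : SwitchEquiv G H) :
    Nonempty (double H ≃g double G) := by
  induction h with
  | refl => exact ⟨RelIso.refl (double G).Adj⟩
  | tail _ hstep ih =>
    rcases hstep with ⟨v, rfl⟩
    rcases ih with ⟨e⟩
    exact ⟨(doubleSwitchIso _ v).trans e⟩

end DoubleIso2

section Surjectivity
variable {n : ℕ}

set_option maxHeartbeats 2000000 in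
lemma exists_double_iso (H : SimpleGraph (Fin n ⊕ Fin n)) (c : (Fin n ⊕ Fin n) → Fin n)
    (hc : IsRainbow H c) : ∃ G : SimpleGraph (Fin n), Nonempty (double G ≃g H) := by
  classical
  -- the same-color matching
  set m : (Fin n ⊕ Fin n) → (Fin n ⊕ Fin n) := fun v => (hc v (c v)).choose with hm
  have hmspec : ∀ v : (Fin n ⊕ Fin n), (H.Adj v (m v) ∧ c (m v) = c v) ∧
      ∀ y, H.Adj v y ∧ c y = c v → y = m v := fun v => (hc v (c v)).choose_spec
  have hmadj : ∀ v, H.Adj v (m v) := fun v => (hmspec v).1.1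
  have hmc : ∀ v, c (m v) = c v := fun v => (hmspec v).1.2
  have hmne : ∀ v, m v ≠ v := fun v => (hmadj v).ne'
  -- degrees are n
  have hdeg : ∀ w : (Fin n ⊕ Fin n), (H.neighborFinset w).card = n := by
    intro w
    have h0 : (H.neighborFinset w).card = (Finset.univ : Finset (Fin n)).card := by
      apply Finset.card_bij (fun w' _ => c w')
      · intro x hx
        simp
      · intro w1 h1 w2 h2 he
        rw [SimpleGraph.mem_neighborFinset] at h1 h2
        exact (hc w (c w2)).unique ⟨h1, he⟩ ⟨h2, rfl⟩
      · intro i _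
        obtain ⟨w', ⟨h1, h2⟩, -⟩ := hc w i
        exact ⟨w', SimpleGraph.mem_neighborFinset _ _ _ |>.mpr h1, h2⟩
    simpa using h0
  -- color classes have exactly two elements
  have hclass : ∀ u v : (Fin n ⊕ Fin n), c u = c v → u = v ∨ u = m v := by
    intro u v hcu
    set C : Finset (Fin n ⊕ Fin n) := Finset.univ.filter (fun x => c x = c v) with hC
    set E : Finset ((Fin n ⊕ Fin n) × (Fin n ⊕ Fin n)) := Finset.univ.filter (fun p : (Fin n ⊕ Fin n) × (Fin n ⊕ Fin n) => H.Adj p.1 p.2 ∧ c p.2 = c v)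
      with hE
    have hE1 : E.card = Fintype.card (Fin n ⊕ Fin n) := by
      rw [← Finset.card_univ]
      apply Finset.card_bij (fun p _ => p.1)
      · intro p hp
        simp
      · intro p1 h1 p2 h2 he
        simp only [hE, Finset.mem_filter] at h1 h2
        rw [← he] at h2
        have h4 : p1.2 = p2.2 := (hc p1.1 (c v)).unique ⟨h1.2.1, h1.2.2⟩ ⟨h2.2.1, h2.2.2⟩
        exact Prod.ext he h4
      · intro x _
        refine ⟨(x, (hc x (c v)).choose), ?_, rfl⟩
        simp only [hE, Finset.mem_filter]
        have hch := (hc x (c v)).choose_spec.1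
        exact ⟨Finset.mem_univ _, hch.1, hch.2⟩
    have hmemEC : ∀ p ∈ E, p.2 ∈ C := by
      intro p hp
      simp only [hE, Finset.mem_filter] at hp
      simp only [hC, Finset.mem_filter]
      exact ⟨Finset.mem_univ _, hp.2.2⟩
    have hE2 : E.card = ∑ w ∈ C, (E.filter (fun p => p.2 = w)).card :=
      Finset.card_eq_sum_card_fiberwise hmemEC
    have hfib : ∀ w ∈ C, (E.filter (fun p => p.2 = w)).card = n := by
      intro w hw
      simp only [hC, Finset.mem_filter] at hw
      have h0 : (E.filter (fun p => p.2 = w)).card = (H.neighborFinset w).card := by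
        apply Finset.card_bij (fun p _ => p.1)
        · intro p hp
          simp only [hE, Finset.mem_filter, Finset.filter_filter] at hp
          rw [SimpleGraph.mem_neighborFinset]
          have := hp.2.1.1
          rw [hp.2.2] at this
          exact this.symm
        · intro p1 h1 p2 h2 he
          simp only [hE, Finset.mem_filter, Finset.filter_filter] at h1 h2
          exact Prod.ext he (h1.2.2.trans h2.2.2.symm)
        · intro x hx
          rw [SimpleGraph.mem_neighborFinset] at hx
          refine ⟨(x, w), ?_, rfl⟩
          simp only [hE, Finset.mem_filter, Finset.filter_filter]
          exact ⟨Finset.mem_univ _, ⟨hx.symm, hw.2⟩, trivial⟩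
      rw [h0, hdeg w]
    have h5 : E.card = C.card * n := by
      rw [hE2, Finset.sum_congr rfl hfib, Finset.sum_const, smul_eq_mul]
    have h6 : Fintype.card (Fin n ⊕ Fin n) = 2 * n := by
      simp only [Fintype.card_sum, Fintype.card_fin]
      ring
    have hCcard : C.card * n = 2 * n := by
      rw [← h5, hE1, h6]
    have hnpos : 0 < n := by
      rcases u with i | i
      · exact i.pos
      · exact i.pos
    have hC2 : C.card = 2 := Nat.eq_of_mul_eq_mul_right hnpos hCcard
    have hsub : ({v, m v} : Finset (Fin n ⊕ Fin n)) ⊆ C := by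
      intro x hx
      simp only [Finset.mem_insert, Finset.mem_singleton] at hx
      simp only [hC, Finset.mem_filter]
      rcases hx with rfl | rfl
      · exact ⟨Finset.mem_univ _, rfl⟩
      · exact ⟨Finset.mem_univ _, hmc v⟩
    have hpaircard : ({v, m v} : Finset (Fin n ⊕ Fin n)).card = 2 := by
      rw [Finset.card_insert_of_notMem (by simp [Ne, eq_comm]; exact fun hh => hmne v hh.symm),
        Finset.card_singleton]
    have heq : ({v, m v} : Finset (Fin n ⊕ Fin n)) = C :=
      Finset.eq_of_subset_of_card_le hsub (by rw [hC2, hpaircard])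
    have huC : u ∈ C := by
      simp only [hC, Finset.mem_filter]
      exact ⟨Finset.mem_univ _, hcu⟩
    rw [← heq] at huC
    simpa using huC
  -- the splitting property
  have hsplit : ∀ u v : (Fin n ⊕ Fin n), H.Adj u v ↔ ¬ H.Adj u (m v) := by
    intro u v
    constructor
    · intro h1 h2
      have h3 := (hc u (c v)).unique ⟨h1, rfl⟩ ⟨h2, hmc v⟩
      exact hmne v h3.symm
    · intro hn
      obtain ⟨w, ⟨hw1, hw2⟩, -⟩ := hc u (c v)
      rcases hclass w v hw2 with rfl | hw
      · exact hw1
      · rw [hw] at hw1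
        exact absurd hw1 hn
  -- representatives of the color classes
  set a : Fin n → (Fin n ⊕ Fin n) := fun i => (hc (Sum.inl i) i).choose with ha
  have hac : ∀ i, c (a i) = i := fun i => ((hc (Sum.inl i) i).choose_spec.1).2
  set b : Fin n → (Fin n ⊕ Fin n) := fun i => m (a i) with hb
  have hbdef : ∀ i, b i = m (a i) := fun i => rfl
  have hbc : ∀ i, c (b i) = i := by
    intro i
    rw [hbdef, hmc, hac]
  have hab : ∀ i, a i ≠ b i := fun i => (hmne (a i)).symm
  -- the bijection
  set e0 : Fin n ⊕ Fin n → (Fin n ⊕ Fin n) := Sum.elim a b with he0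
  have hinj : Function.Injective e0 := by
    rintro (i | i) (j | j) hx <;> simp only [he0, Sum.elim_inl, Sum.elim_inr] at hx
    · rw [show i = j by rw [← hac i, ← hac j, hx]]
    · exfalso
      have hij : i = j := by rw [← hac i, ← hbc j, hx]
      rw [hij] at hx
      exact hab j hx
    · exfalso
      have hij : i = j := by rw [← hbc i, ← hac j, hx]
      rw [hij] at hx
      exact hab j hx.symm
    · rw [show i = j by rw [← hbc i, ← hbc j, hx]]
  have hsurje : Function.Surjective e0 := by
    intro u
    rcases hclass u (a (c u)) (by rw [hac]) with h | h
    · exact ⟨Sum.inl (c u), h.symm⟩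
    · exact ⟨Sum.inr (c u), h.symm⟩
  set e : (Fin n ⊕ Fin n) ≃ (Fin n ⊕ Fin n) := Equiv.ofBijective e0 ⟨hinj, hsurje⟩ with he
  have he_inl : ∀ i, e (Sum.inl i) = a i := fun i => rfl
  have he_inr : ∀ i, e (Sum.inr i) = b i := fun i => rfl
  -- the base graph
  set K : SimpleGraph (Fin n) := SimpleGraph.fromRel (fun i j => H.Adj (a i) (a j)) with hK
  have hKadj : ∀ i j, K.Adj i j ↔ H.Adj (a i) (a j) := by
    intro i j
    rw [hK, SimpleGraph.fromRel_adj]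
    constructor
    · rintro ⟨hne, h | h⟩
      · exact h
      · exact h.symm
    · intro h
      refine ⟨?_, Or.inl h⟩
      intro hij
      rw [hij] at h
      exact H.irrefl h
  have hparallel : ∀ i j, H.Adj (b i) (b j) ↔ H.Adj (a i) (a j) := by
    intro i j
    have s1 := hsplit (b i) (a j)
    rw [← hbdef j] at s1
    have s2 := hsplit (a j) (a i)
    rw [← hbdef i] at s2
    have c1 : H.Adj (b i) (a j) ↔ H.Adj (a j) (b i) := SimpleGraph.adj_comm _ _ _
    have c2 : H.Adj (a i) (a j) ↔ H.Adj (a j) (a i) := SimpleGraph.adj_comm _ _ _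
    tauto
  refine ⟨K, ⟨⟨e, ?_⟩⟩⟩
  intro x y
  rcases x with i | i <;> rcases y with j | j
  · rw [show e (Sum.inl i) = a i from rfl, show e (Sum.inl j) = a j from rfl,
      double_adj_ll, hKadj]
  · rw [show e (Sum.inl i) = a i from rfl, show e (Sum.inr j) = b j from rfl, double_adj_lr]
    have s1 := hsplit (a i) (a j)
    rw [← hbdef j] at s1
    by_cases hij : i = j
    · subst hij
      simp only [true_or, iff_true]
      rw [hbdef]
      simpa using hmadj (a i)
    · rw [hKadj]
      constructor
      · intro h
        exact Or.inr (fun hadj => (s1.mp hadj) h)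
      · rintro (h | h)
        · exact absurd h hij
        · by_contra hcon
          exact h (s1.mpr hcon)
  · rw [show e (Sum.inr i) = b i from rfl, show e (Sum.inl j) = a j from rfl, double_adj_rl]
    have s1 := hsplit (a j) (a i)
    rw [← hbdef i] at s1
    have c1 : H.Adj (b i) (a j) ↔ H.Adj (a j) (b i) := SimpleGraph.adj_comm _ _ _
    by_cases hij : i = j
    · subst hij
      simp only [true_or, iff_true]
      rw [c1, hbdef]
      simpa using hmadj (a i)
    · rw [hKadj, c1]
      constructor
      · intro h
        refine Or.inr (fun hadj => ?_)
        have c2 : H.Adj (a i) (a j) ↔ H.Adj (a j) (a i) := SimpleGraph.adj_comm _ _ _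
        exact (s1.mp (c2.mp hadj)) h
      · rintro (h | h)
        · exact absurd h hij
        · by_contra hcon
          have c2 : H.Adj (a i) (a j) ↔ H.Adj (a j) (a i) := SimpleGraph.adj_comm _ _ _
          exact h (c2.mpr (s1.mpr hcon))
  · rw [show e (Sum.inr i) = b i from rfl, show e (Sum.inr j) = b j from rfl,
      double_adj_rr, hparallel, hKadj]

end Surjectivity

section Injectivity
variable {n : ℕ}

set_option maxHeartbeats 1000000 in
lemma switchEquivIso_of_double_iso (G G' : SimpleGraph (Fin n))
    (φ : double G ≃g double G') : SwitchEquivIso G G' := by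
  classical
  -- the two matchings on `double G`
  set τ : (Fin n ⊕ Fin n) → (Fin n ⊕ Fin n) := Sum.elim Sum.inr Sum.inl with hτ
  have hτinv : Function.Involutive τ := by
    rintro (i | i) <;> rfl
  have hτne : ∀ v, τ v ≠ v := by
    rintro (i | i) <;> simp [hτ]
  set m' : (Fin n ⊕ Fin n) → (Fin n ⊕ Fin n) := fun v => φ.symm (τ (φ v)) with hm'
  have hφs : ∀ x, φ (φ.symm x) = x := fun x => φ.apply_symm_apply x
  have hφs' : ∀ x, φ.symm (φ x) = x := fun x => φ.symm_apply_apply x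
  have hm'inv : Function.Involutive m' := by
    intro v
    simp only [hm']
    rw [hφs, hτinv, hφs']
  have hm'ne : ∀ v, m' v ≠ v := by
    intro v hv
    have h1 : φ (m' v) = τ (φ v) := by
      simp only [hm']
      rw [hφs]
    rw [hv] at h1
    exact hτne (φ v) h1.symm
  obtain ⟨c, hcm, hcm'⟩ := exists_parity_coloring τ m' hτinv hm'inv hτne hm'ne
  -- common transversal representatives
  set r : Fin n → (Fin n ⊕ Fin n) := fun i => if c (Sum.inl i) then Sum.inl i else Sum.inr i
    with hr
  have hcr : ∀ i, c (r i) := by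
    intro i
    simp only [hr]
    split_ifs with h
    · exact h
    · have := hcm (Sum.inl i)
      rw [show τ (Sum.inl i) = Sum.inr i from rfl] at this
      exact this.mpr h
  have hri : ∀ i, r i = Sum.inl i ∨ r i = Sum.inr i := by
    intro i
    simp only [hr]
    split_ifs <;> simp
  set idx : (Fin n ⊕ Fin n) → Fin n := Sum.elim id id with hidx
  have hridx : ∀ i, idx (r i) = i := by
    intro i
    rcases hri i with h | h <;> rw [h] <;> rfl
  set ρ : Fin n → Fin n := fun i => idx (φ (r i)) with hρ
  set r' : Fin n → (Fin n ⊕ Fin n) :=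
    fun j => if c (φ.symm (Sum.inl j)) then φ.symm (Sum.inl j) else φ.symm (Sum.inr j) with hr'
  have hr'ρ : ∀ i, r' (ρ i) = r i := by
    intro i
    rcases hφri : φ (r i) with j | j
    · have hρi : ρ i = j := by rw [hρ]; simp only; rw [hφri]; rfl
      rw [hρi, hr']
      simp only
      have h1 : φ.symm (Sum.inl j) = r i := by rw [← hφri, hφs']
      rw [h1]
      simp [hcr i]
    · have hρi : ρ i = j := by rw [hρ]; simp only; rw [hφri]; rfl
      rw [hρi, hr']
      simp only
      have h1 : φ.symm (Sum.inr j) = r i := by rw [← hφri, hφs']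
      have h2 : φ.symm (Sum.inl j) = m' (r i) := by
        simp only [hm']
        rw [hφri]
        rfl
      have h3 : ¬ c (φ.symm (Sum.inl j)) := by
        rw [h2]
        rw [hcm' (r i)]
        intro hcon
        exact hcon (hcr i)
      rw [if_neg h3, h1]
  have hρinj : Function.Injective ρ := by
    intro i i' hii
    have h1 : r i = r i' := by
      rw [← hr'ρ i, ← hr'ρ i', hii]
    rw [← hridx i, ← hridx i', h1]
  set ρe : Fin n ≃ Fin n := Equiv.ofBijective ρ (Finite.injective_iff_bijective.mp hρinj)
    with hρe
  have hρe_apply : ∀ i, ρe i = ρ i := fun i => rfl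
  set q : Fin n → (Fin n ⊕ Fin n) := fun j => φ (r' j) with hqdef
  have hq : ∀ j, q j = Sum.inl j ∨ q j = Sum.inr j := by
    intro j
    simp only [hqdef, hr']
    split_ifs
    · rw [hφs]; exact Or.inl rfl
    · rw [hφs]; exact Or.inr rfl
  have hqρ : ∀ i, q (ρ i) = φ (r i) := by
    intro i
    simp only [hqdef]
    rw [hr'ρ]
  -- the switching functions
  set sA : Fin n → Prop := fun i => r i = Sum.inr i with hsA
  set sA' : Fin n → Prop := fun j => q j = Sum.inr j with hsA'
  have L1 : ∀ i j, i ≠ j →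
      ((double G).Adj (r i) (r j) ↔ Xor' (G.Adj i j) (¬ (sA i ↔ sA j))) := by
    intro i j hij
    rcases hri i with h1 | h1 <;> rcases hri j with h2 | h2 <;>
      rw [h1, h2] <;>
      simp only [hsA, h1, h2, double_adj_ll, double_adj_lr, double_adj_rl, double_adj_rr,
        Xor', xor_def] <;>
      simp [hij] <;>
      tauto
  have L1' : ∀ i j, i ≠ j →
      ((double G').Adj (q i) (q j) ↔ Xor' (G'.Adj i j) (¬ (sA' i ↔ sA' j))) := by
    intro i j hij
    rcases hq i with h1 | h1 <;> rcases hq j with h2 | h2 <;>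
      rw [h1, h2] <;>
      simp only [hsA', h1, h2, double_adj_ll, double_adj_lr, double_adj_rl, double_adj_rr,
        Xor', xor_def] <;>
      simp [hij] <;>
      tauto
  -- the isomorphism between the two switched graphs
  have hψadj : ∀ i j, (switchB G' sA').Adj (ρe i) (ρe j) ↔ (switchB G sA).Adj i j := by
    intro i j
    by_cases hij : i = j
    · subst hij
      simp [SimpleGraph.irrefl]
    · have hρij : ρ i ≠ ρ j := fun hcon => hij (hρinj hcon)
      rw [hρe_apply, hρe_apply, switchB_adj, switchB_adj]
      rw [show (Xor' (G'.Adj (ρ i) (ρ j)) (¬ (sA' (ρ i) ↔ sA' (ρ j)))) ↔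
          (double G').Adj (q (ρ i)) (q (ρ j)) from (L1' (ρ i) (ρ j) hρij).symm]
      rw [hqρ, hqρ]
      rw [show (double G').Adj (φ (r i)) (φ (r j)) ↔ (double G).Adj (r i) (r j) from
        φ.map_adj_iff]
      rw [show (double G).Adj (r i) (r j) ↔ Xor' (G.Adj i j) (¬ (sA i ↔ sA j)) from
        L1 i j hij]
      constructor
      · intro h
        exact ⟨hij, h.2⟩
      · intro h
        exact ⟨hρij, h.2⟩
  set ψ : (switchB G sA) ≃g (switchB G' sA') := ⟨ρe, fun {i j} => hψadj i j⟩ with hψ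
  have hψ_apply : ∀ i, ψ i = ρ i := fun i => rfl
  -- assemble
  refine ⟨switchB (switchB G sA) (fun i => sA' (ψ i)), ?_, ?_⟩
  · exact switchEquiv_trans (switchEquiv_switchB G sA)
      (switchEquiv_switchB (switchB G sA) _)
  · have hiso := switchBIso ψ sA'
    have hfin : switchB (switchB G' sA') sA' = G' := switchB_switchB
    rw [hfin] at hiso
    exact ⟨hiso⟩

end Injectivity

section Final

lemma rainbowIsoRel_equivalence (n : ℕ) : Equivalence (RainbowIsoRel n) := by
  constructor
  · intro H
    exact ⟨RelIso.refl H.1.Adj⟩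
  · rintro H H' ⟨e⟩
    exact ⟨e.symm⟩
  · rintro H1 H2 H3 ⟨e1⟩ ⟨e2⟩
    exact ⟨e1.trans e2⟩


/-- sending the switching class of `G` to the isomorphism class of its
double is a bijection between switching classes of graphs on `n` vertices and
isomorphism classes of `n`-rainbow graphs on `2n` vertices. -/
theorem switching_classes_equiv_rainbow (n : ℕ) :
    ∃ f : Quot (SwitchEquivIso (V := Fin n)) → Quot (RainbowIsoRel n),
      Function.Bijective f ∧
        ∀ (G : SimpleGraph (Fin n)) (hG : ∃ c : (Fin n ⊕ Fin n) → Fin n, IsRainbow (double G) c),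
          f (Quot.mk (SwitchEquivIso (V := Fin n)) G)
            = Quot.mk (RainbowIsoRel n) ⟨double G, hG⟩ := by
  classical
  set g : SimpleGraph (Fin n) → Quot (RainbowIsoRel n) :=
    fun G => Quot.mk (RainbowIsoRel n) ⟨double G, ⟨Sum.elim id id, rainbow_double G⟩⟩ with hg
  have hsound : ∀ G G' : SimpleGraph (Fin n), SwitchEquivIso G G' → g G = g G' := by
    rintro G G' ⟨Hm, hsw, ⟨e⟩⟩
    obtain ⟨e1⟩ := double_iso_of_switchEquiv hsw
    exact Quot.sound ⟨(e1.symm.trans (doubleMapIso e) : double G ≃g double G')⟩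
  refine ⟨Quot.lift g hsound, ⟨?_, ?_⟩, ?_⟩
  · -- injective
    intro x y
    induction x using Quot.ind with | _ G =>
    induction y using Quot.ind with | _ G' =>
    intro h
    have h2 : Quot.mk (RainbowIsoRel n) ⟨double G, ⟨Sum.elim id id, rainbow_double G⟩⟩
        = Quot.mk (RainbowIsoRel n) ⟨double G', ⟨Sum.elim id id, rainbow_double G'⟩⟩ := h
    rw [Quot.eq] at h2
    obtain ⟨φ⟩ := ((rainbowIsoRel_equivalence n).eqvGen_iff).mp h2
    exact Quot.sound (switchEquivIso_of_double_iso G G' φ)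
  · -- surjective
    intro y
    induction y using Quot.ind with | _ Hp =>
    obtain ⟨H, hH⟩ := Hp
    obtain ⟨c, hc⟩ := hH
    obtain ⟨K, ⟨iso⟩⟩ := exists_double_iso H c hc
    refine ⟨Quot.mk _ K, ?_⟩
    exact Quot.sound (⟨iso⟩ : RainbowIsoRel n ⟨double K, ⟨Sum.elim id id, rainbow_double K⟩⟩
      ⟨H, ⟨c, hc⟩⟩)
  · intro G hG
    exact rfl
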